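/- arXiv:1005.3445 — 2 statements merged into one kernel-verified Lean document; each statement's English description precedes it below -/
import Mathlib

section
/- Let g ∈ SL_d(k) with Cartan decomposition g = k(g)a(g)u(g), and set v_g = [k(g)e_1] ∈ P(V) and H_g = [span(u(g)^{-1}e_2, …, u(g)^{-1}e_d)]. Let 0 < ε < 1 and suppose |a_2(g)/a_1(g)| ≤ ε². Then for every [x] ∈ P(V) with δ([x], H_g) > ε one has δ(g·[x], v_g) ≤ (|a_2(g)|/|a_1(g)|) / δ([x], H_g) < ε. In particular, [g] is ε-contracting with attracting point v_g and repelling hyperplane H_g. -/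
open MeasureTheory ProbabilityTheory Filter Matrix
open scoped ENNReal

noncomputable section

/-- The absolute value of `k` is non-archimedean (ultrametric). -/
def IsNonarch (k : Type*) [NormedField k] : Prop := ∀ a b : k, ‖a + b‖ ≤ max ‖a‖ ‖b‖

variable {k : Type*} [NontriviallyNormedField k] {d : ℕ}

open Classical in
/-- The canonical norm on `k^ι`: the Euclidean/Hermitian norm in the archimedean
case, the max norm in the non-archimedean case. -/
def vnorm {ι : Type*} [Fintype ι] (x : ι → k) : ℝ :=
  if IsNonarch k then ⨆ i, ‖x i‖ else Real.sqrt (∑ i, ‖x i‖ ^ 2)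

/-- The operator norm on matrices induced by the canonical norm. -/
def mnorm {ι : Type*} [Fintype ι] (g : Matrix ι ι k) : ℝ :=
  sSup ((fun x => vnorm (g.mulVec x)) '' {x : ι → k | vnorm x = 1})

open Classical in
/-- The norm of `x ∧ y` in `Λ² k^d`. -/
def wnorm (x y : Fin d → k) : ℝ :=
  if IsNonarch k then ⨆ p : Fin d × Fin d, ‖x p.1 * y p.2 - x p.2 * y p.1‖
  else Real.sqrt (∑ p : Fin d × Fin d,
    if p.1 < p.2 then ‖x p.1 * y p.2 - x p.2 * y p.1‖ ^ 2 else 0)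

/-- The Fubini–Study distance between the directions of two nonzero vectors:
`δ([x],[y]) = ‖x ∧ y‖ / (‖x‖ ‖y‖)`. -/
def pdist (x y : Fin d → k) : ℝ := wnorm x y / (vnorm x * vnorm y)

/-- `δ([x], H)` where `H = ker f` and the linear form `f` has coordinate vector `c`
in the dual basis; equals `|f x| / (‖f‖ ‖x‖)` (the dual norm of `f` being the
canonical norm of its coordinate vector `c`). -/
def pdistH (x c : Fin d → k) : ℝ := ‖∑ i, c i * x i‖ / (vnorm c * vnorm x)

/-- The special linear group `SL_d(k)`. -/
abbrev SLgp (d : ℕ) (k : Type*) [Field k] := Matrix.SpecialLinearGroup (Fin d) k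

instance {m : Type*} [Fintype m] [MeasurableSpace k] : MeasurableSpace (Matrix m m k) :=
  inferInstanceAs (MeasurableSpace (m → m → k))
instance : TopologicalSpace (SLgp d k) :=
  inferInstanceAs (TopologicalSpace {A : Matrix (Fin d) (Fin d) k // A.det = 1})
instance [MeasurableSpace k] : MeasurableSpace (SLgp d k) :=
  inferInstanceAs (MeasurableSpace {A : Matrix (Fin d) (Fin d) k // A.det = 1})
instance : TopologicalSpace (Projectivization k (Fin d → k)) :=
  instTopologicalSpaceQuotient
instance [MeasurableSpace k] : MeasurableSpace (Projectivization k (Fin d → k)) :=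
  Quotient.instMeasurableSpace

lemma slInjective (g : SLgp d k) :
    Function.Injective ((g : Matrix (Fin d) (Fin d) k).mulVecLin) := by
  intro x y h
  simp only [Matrix.mulVecLin_apply] at h
  have h2 := congrArg (fun v => ((g⁻¹ : SLgp d k) : Matrix (Fin d) (Fin d) k).mulVec v) h
  simpa [Matrix.mulVec_mulVec, Matrix.adjugate_mul,
    Matrix.SpecialLinearGroup.det_coe] using h2

lemma slTransposeInjective (g : SLgp d k) :
    Function.Injective (((g : Matrix (Fin d) (Fin d) k))ᵀ.mulVecLin) := by
  intro x y h
  simp only [Matrix.mulVecLin_apply] at h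
  have h2 := congrArg
    (fun v => (((g⁻¹ : SLgp d k) : Matrix (Fin d) (Fin d) k))ᵀ.mulVec v) h
  simpa [Matrix.mulVec_mulVec, ← Matrix.transpose_mul, Matrix.mul_adjugate,
    Matrix.SpecialLinearGroup.det_coe] using h2

lemma sl_mulVec_ne_zero (g : SLgp d k) {x : Fin d → k} (hx : x ≠ 0) :
    (g : Matrix (Fin d) (Fin d) k).mulVec x ≠ 0 := by
  intro h
  apply hx
  apply slInjective g
  simpa [Matrix.mulVecLin_apply] using h

/-- The action of `SL_d(k)` on the projective space `P(k^d)`. -/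
def pact (g : SLgp d k) :
    Projectivization k (Fin d → k) → Projectivization k (Fin d → k) :=
  Projectivization.map ((g : Matrix (Fin d) (Fin d) k).mulVecLin) (slInjective g)

/-- The action of `SL_d(k)` on the projective space of the dual `P((k^d)^*)`,
where linear forms are identified with their coordinate vectors in the dual basis:
`g · f = f ∘ g⁻¹` corresponds to `c ↦ (g⁻¹)ᵀ c`. -/
def pactDual (g : SLgp d k) :
    Projectivization k (Fin d → k) → Projectivization k (Fin d → k) :=
  Projectivization.map (((g⁻¹ : SLgp d k) : Matrix (Fin d) (Fin d) k))ᵀ.mulVecLin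
    (slTransposeInjective g⁻¹)

/-- Fubini–Study distance on the projective space. -/
def pdelta (P Q : Projectivization k (Fin d → k)) : ℝ := pdist P.rep Q.rep

/-- Distance from a point of projective space to the projective hyperplane defined
by the linear form with coordinate vector `c`. -/
def pdeltaH (P : Projectivization k (Fin d → k)) (c : Fin d → k) : ℝ := pdistH P.rep c

/-- The topological support of a measure. -/
def measSupport {G : Type*} [TopologicalSpace G] [MeasurableSpace G]
    (μ : Measure G) : Set G :=
  {g | ∀ U : Set G, IsOpen U → g ∈ U → μ U ≠ 0}

/-- The smallest closed subsemigroup containing a set. -/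
def smallestClosedSemigroup {G : Type*} [TopologicalSpace G] [Mul G] (A : Set G) :
    Set G :=
  ⋂₀ {S : Set G | A ⊆ S ∧ IsClosed S ∧ ∀ a ∈ S, ∀ b ∈ S, a * b ∈ S}

/-- `Γ_μ`: the smallest closed subsemigroup containing the support of `μ`. -/
def GammaMu {G : Type*} [TopologicalSpace G] [MeasurableSpace G] [Mul G]
    (μ : Measure G) : Set G :=
  smallestClosedSemigroup (measSupport μ)

/-- A set of matrices acts strongly irreducibly: no finite union of nonzero proper
subspaces is invariant. -/
def StronglyIrred (Γ : Set (SLgp d k)) : Prop :=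
  ∀ F : Finset (Submodule k (Fin d → k)), F.Nonempty → (∀ W ∈ F, W ≠ ⊥ ∧ W ≠ ⊤) →
    ¬ (∀ g ∈ Γ, ∀ x : Fin d → k, (∃ W ∈ F, x ∈ W) →
        ∃ W' ∈ F, (g : Matrix (Fin d) (Fin d) k).mulVec x ∈ W')

/-- There are `γ_n ∈ Γ` and `r_n ∈ k` with `‖r_n γ_n‖ = 1` such that `r_n γ_n`
converges to a rank `p` endomorphism. -/
def HasIndexSeq (Γ : Set (SLgp d k)) (p : ℕ) : Prop :=
  ∃ (γ : ℕ → SLgp d k) (r : ℕ → k) (A : Matrix (Fin d) (Fin d) k),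
    (∀ n, γ n ∈ Γ) ∧
    (∀ n, mnorm (r n • ((γ n : Matrix (Fin d) (Fin d) k))) = 1) ∧
    Tendsto (fun n => r n • ((γ n : Matrix (Fin d) (Fin d) k))) atTop (nhds A) ∧
    A.rank = p

/-- `Γ` is contracting: some subsequence of some normalized sequence of `Γ`
converges to a rank-one endomorphism. -/
def ContractingSet (Γ : Set (SLgp d k)) : Prop :=
  ∃ (γ : ℕ → SLgp d k) (r : ℕ → k) (φ : ℕ → ℕ) (A : Matrix (Fin d) (Fin d) k),
    (∀ n, γ n ∈ Γ) ∧
    (∀ n, mnorm (r n • ((γ n : Matrix (Fin d) (Fin d) k))) = 1) ∧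
    StrictMono φ ∧
    Tendsto (fun n => r (φ n) • ((γ (φ n) : Matrix (Fin d) (Fin d) k))) atTop (nhds A) ∧
    A.rank = 1

/-- `μ` has an exponential (local) moment: `∫ ‖g‖^τ dμ(g) < ∞` for some `τ > 0`. -/
def ExpLocalMoment [MeasurableSpace k] (μ : Measure (SLgp d k)) : Prop :=
  ∃ τ : ℝ, 0 < τ ∧
    ∫⁻ g, ENNReal.ofReal (mnorm ((g : Matrix (Fin d) (Fin d) k)) ^ τ) ∂μ < ⊤

/-- `ν` is invariant for the measure `m` and the action `act`:
`∫∫ φ(g·a) dm(g) dν(a) = ∫ φ dν` for all bounded Borel `φ`. -/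
def InvariantMeasure {α G : Type*} [MeasurableSpace α] [MeasurableSpace G]
    (m : Measure G) (act : G → α → α) (ν : Measure α) : Prop :=
  ∀ φ : α → ℝ, Measurable φ → (∃ C, ∀ a, |φ a| ≤ C) →
    ∫ g, ∫ a, φ (act g a) ∂ν ∂m = ∫ a, φ a ∂ν

/-- The right random walk `M_n = X_1 ⋯ X_n`. -/
def Mword {Ω G : Type*} [Monoid G] (X : ℕ → Ω → G) (n : ℕ) (ω : Ω) : G :=
  ((List.range n).map fun i => X (i + 1) ω).prod

/-- The left random walk `S_n = X_n ⋯ X_1`. -/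
def Sword {Ω G : Type*} [Monoid G] (X : ℕ → Ω → G) (n : ℕ) (ω : Ω) : G :=
  ((List.range n).map fun i => X (n - i) ω).prod

/-- The second compound matrix: the matrix of the induced map on `Λ² k^d`,
whose entries are the `2 × 2` minors. -/
def comp2 (g : Matrix (Fin d) (Fin d) k) :
    Matrix {p : Fin d × Fin d // p.1 < p.2} {p : Fin d × Fin d // p.1 < p.2} k :=
  Matrix.of fun p q =>
    g p.1.1 q.1.1 * g p.1.2 q.1.2 - g p.1.1 q.1.2 * g p.1.2 q.1.1

/-- The maximal compact group `K`: the elements of `SL_d(k)` acting by isometries of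
the canonical norm (this is `SO_d(ℝ)`, `SU_d(ℂ)`, resp. `SL_d(O_k)`). -/
def Kiso (d : ℕ) (k : Type*) [NontriviallyNormedField k] : Set (SLgp d k) :=
  {g | ∀ x : Fin d → k, vnorm ((g : Matrix (Fin d) (Fin d) k).mulVec x) = vnorm x}

end

noncomputable section
variable {k : Type*} [NontriviallyNormedField k] {d : ℕ}

lemma single_one_ne_zero (i : Fin d) : (Pi.single i (1 : k) : Fin d → k) ≠ 0 := by
  intro h
  have h2 : (1 : k) = 0 := by simpa using congrFun h i
  exact one_ne_zero h2

/-- `[g]` is `ε`-contracting with attracting point `v` and repelling hyperplane the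
kernel of the form with coordinate vector `c`. -/
def EpsContractingSL (g : SLgp d k) (v : Projectivization k (Fin d → k))
    (c : Fin d → k) (ε : ℝ) : Prop :=
  ∀ Q : Projectivization k (Fin d → k), ε < pdeltaH Q c → pdelta (pact g Q) v < ε

end

noncomputable section StatementHelpers
variable {k : Type*} [NontriviallyNormedField k] {d : ℕ}

lemma vnorm_nonneg (x : Fin d → k) : 0 ≤ vnorm x := by
  unfold vnorm; split_ifs
  · exact Real.iSup_nonneg fun i => norm_nonneg _
  · exact Real.sqrt_nonneg _

lemma norm_le_vnorm (x : Fin d → k) (i : Fin d) : ‖x i‖ ≤ vnorm x := by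
  unfold vnorm; split_ifs
  · exact le_ciSup (f := fun j => ‖x j‖) (Set.finite_range _).bddAbove i
  · rw [show ‖x i‖ = Real.sqrt (‖x i‖ ^ 2) from (Real.sqrt_sq (norm_nonneg _)).symm]
    exact Real.sqrt_le_sqrt
      (Finset.single_le_sum (fun j _ => sq_nonneg (‖x j‖)) (Finset.mem_univ i))

lemma vnorm_pos {x : Fin d → k} (hx : x ≠ 0) : 0 < vnorm x := by
  obtain ⟨i, hi⟩ := Function.ne_iff.mp hx
  exact lt_of_lt_of_le (norm_pos_iff.mpr hi) (norm_le_vnorm x i)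

lemma vnorm_smul (a : k) (x : Fin d → k) : vnorm (a • x) = ‖a‖ * vnorm x := by
  unfold vnorm; split_ifs
  · rw [Real.mul_iSup_of_nonneg (norm_nonneg a)]
    refine iSup_congr fun i => ?_
    simp [norm_mul]
  · rw [← Real.sqrt_sq (norm_nonneg a), ← Real.sqrt_mul (sq_nonneg _), Finset.mul_sum]
    congr 1
    exact Finset.sum_congr rfl fun i _ => by simp [norm_mul, mul_pow]

lemma vnorm_single (i : Fin d) : vnorm (Pi.single i (1 : k)) = 1 := by
  haveI : Nonempty (Fin d) := ⟨i⟩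
  have hval : ∀ j, ‖(Pi.single i (1 : k) : Fin d → k) j‖ = if j = i then 1 else 0 := by
    intro j; rcases eq_or_ne j i with h | h <;> simp [h, Pi.single_apply]
  unfold vnorm; split_ifs
  · apply le_antisymm
    · exact ciSup_le fun j => by rw [hval]; split_ifs <;> norm_num
    · have h2 := le_ciSup
        (Set.finite_range fun j => ‖(Pi.single i (1 : k) : Fin d → k) j‖).bddAbove i
      rw [hval i, if_pos rfl] at h2
      exact h2
  · rw [Finset.sum_eq_single i (fun j _ hj => by rw [hval j, if_neg hj]; norm_num)
      (fun h => absurd (Finset.mem_univ i) h)]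
    rw [hval i, if_pos rfl]
    simp

lemma vnorm_le_mul {C : ℝ} (hC : 0 ≤ C) (x y : Fin d → k) (h : ∀ i, ‖x i‖ ≤ C * ‖y i‖) :
    vnorm x ≤ C * vnorm y := by
  unfold vnorm; split_ifs
  · rcases isEmpty_or_nonempty (Fin d) with hE | hE
    · rw [Real.iSup_of_isEmpty, Real.iSup_of_isEmpty]; simp
    · refine ciSup_le fun i => (h i).trans ?_
      exact mul_le_mul_of_nonneg_left
        (le_ciSup (f := fun j => ‖y j‖) (Set.finite_range _).bddAbove i) hC
  · rw [← Real.sqrt_sq hC, ← Real.sqrt_mul (sq_nonneg _), Finset.mul_sum]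
    apply Real.sqrt_le_sqrt
    refine Finset.sum_le_sum fun i _ => ?_
    calc ‖x i‖ ^ 2 ≤ (C * ‖y i‖) ^ 2 := by
          have := h i
          have h0 := norm_nonneg (x i)
          nlinarith
      _ = C ^ 2 * ‖y i‖ ^ 2 := by ring

lemma nonarch_sum_le (hna : IsNonarch k) {ι : Type*} (s : Finset ι) (f : ι → k) {B : ℝ}
    (hB : 0 ≤ B) : (∀ j ∈ s, ‖f j‖ ≤ B) → ‖∑ j ∈ s, f j‖ ≤ B := by
  classical
  induction s using Finset.induction_on with
  | empty => intro _; simpa using hB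
  | insert _ _ ha ih =>
      intro h
      rw [Finset.sum_insert ha]
      exact le_trans (hna _ _) (max_le (h _ (Finset.mem_insert_self _ _))
        (ih fun j hj => h j (Finset.mem_insert_of_mem hj)))

lemma norm_sum_mul_le (c x : Fin d → k) : ‖∑ i, c i * x i‖ ≤ vnorm c * vnorm x := by
  by_cases hna : IsNonarch k
  · refine nonarch_sum_le hna Finset.univ _
      (mul_nonneg (vnorm_nonneg c) (vnorm_nonneg x)) fun j _ => ?_
    rw [norm_mul]
    exact mul_le_mul (norm_le_vnorm c j) (norm_le_vnorm x j) (norm_nonneg _) (vnorm_nonneg c)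
  · have h1 : ‖∑ i, c i * x i‖ ≤ ∑ i, ‖c i‖ * ‖x i‖ :=
      (norm_sum_le _ _).trans (le_of_eq (Finset.sum_congr rfl fun i _ => norm_mul _ _))
    have h2 : (∑ i, ‖c i‖ * ‖x i‖) ^ 2 ≤ (∑ i, ‖c i‖ ^ 2) * (∑ i, ‖x i‖ ^ 2) :=
      Finset.sum_mul_sq_le_sq_mul_sq _ _ _
    have h3 : (∑ i, ‖c i‖ * ‖x i‖) ≤ Real.sqrt ((∑ i, ‖c i‖ ^ 2) * (∑ i, ‖x i‖ ^ 2)) := by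
      rw [show (∑ i, ‖c i‖ * ‖x i‖) = Real.sqrt ((∑ i, ‖c i‖ * ‖x i‖) ^ 2) from
        (Real.sqrt_sq (Finset.sum_nonneg fun i _ =>
          mul_nonneg (norm_nonneg _) (norm_nonneg _))).symm]
      exact Real.sqrt_le_sqrt h2
    unfold vnorm
    rw [if_neg hna, if_neg hna, ← Real.sqrt_mul (Finset.sum_nonneg fun i _ => sq_nonneg _)]
    exact h1.trans h3

lemma wnorm_congr (x y x' y' : Fin d → k)
    (h : ∀ p : Fin d × Fin d,
      ‖x p.1 * y p.2 - x p.2 * y p.1‖ = ‖x' p.1 * y' p.2 - x' p.2 * y' p.1‖) :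
    wnorm x y = wnorm x' y' := by
  unfold wnorm; split_ifs
  · exact iSup_congr fun p => h p
  · congr 1
    exact Finset.sum_congr rfl fun p _ => by rw [h p]

lemma wnorm_symm (x y : Fin d → k) : wnorm x y = wnorm y x :=
  wnorm_congr _ _ _ _ fun p => by
    rw [show x p.1 * y p.2 - x p.2 * y p.1 = -(y p.1 * x p.2 - y p.2 * x p.1) by ring, norm_neg]

lemma wnorm_add_smul (x y : Fin d → k) (t : k) : wnorm (x + t • y) y = wnorm x y :=
  wnorm_congr _ _ _ _ fun p => by
    simp only [Pi.add_apply, Pi.smul_apply, smul_eq_mul]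
    congr 1; ring

lemma wnorm_smul_left (a : k) (x y : Fin d → k) : wnorm (a • x) y = ‖a‖ * wnorm x y := by
  have h : ∀ p : Fin d × Fin d, ‖(a • x) p.1 * y p.2 - (a • x) p.2 * y p.1‖
      = ‖a‖ * ‖x p.1 * y p.2 - x p.2 * y p.1‖ := fun p => by
    simp only [Pi.smul_apply, smul_eq_mul]
    rw [← norm_mul]; congr 1; ring
  unfold wnorm; split_ifs
  · rw [Real.mul_iSup_of_nonneg (norm_nonneg a)]
    exact iSup_congr h
  · rw [← Real.sqrt_sq (norm_nonneg a), ← Real.sqrt_mul (sq_nonneg _), Finset.mul_sum]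
    congr 1
    refine Finset.sum_congr rfl fun p _ => ?_
    rw [h p]; split_ifs <;> ring

lemma wnorm_smul_right (b : k) (x y : Fin d → k) : wnorm x (b • y) = ‖b‖ * wnorm x y := by
  rw [wnorm_symm, wnorm_smul_left, wnorm_symm]

lemma pdist_smul {a b : k} (ha : a ≠ 0) (hb : b ≠ 0) (x y : Fin d → k) :
    pdist (a • x) (b • y) = pdist x y := by
  unfold pdist
  rw [wnorm_smul_left, wnorm_smul_right, vnorm_smul, vnorm_smul,
    show ‖a‖ * vnorm x * (‖b‖ * vnorm y) = ‖a‖ * ‖b‖ * (vnorm x * vnorm y) by ring,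
    show ‖a‖ * (‖b‖ * wnorm x y) = ‖a‖ * ‖b‖ * wnorm x y by ring,
    mul_div_mul_left _ _
      (mul_ne_zero (norm_ne_zero_iff.mpr ha) (norm_ne_zero_iff.mpr hb))]

lemma pdelta_mk {u v : Fin d → k} (hu : u ≠ 0) (hv : v ≠ 0) :
    pdelta (Projectivization.mk k u hu) (Projectivization.mk k v hv) = pdist u v := by
  obtain ⟨a, ha⟩ := (Projectivization.mk_eq_mk_iff k _ _
    (Projectivization.rep_nonzero _) hu).mp (Projectivization.mk_rep _)
  obtain ⟨b, hb⟩ := (Projectivization.mk_eq_mk_iff k _ _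
    (Projectivization.rep_nonzero _) hv).mp (Projectivization.mk_rep _)
  unfold pdelta
  rw [← ha, ← hb, Units.smul_def, Units.smul_def, pdist_smul a.ne_zero b.ne_zero]

lemma key_bound {K : Matrix (Fin d) (Fin d) k}
    (hK : ∀ x : Fin d → k, vnorm (K.mulVec x) = vnorm x)
    (i0 : Fin d) (w : Fin d → k) (hw : w i0 = 0) :
    wnorm (K.mulVec w) (K.mulVec (Pi.single i0 1)) ≤ vnorm w := by
  haveI : Nonempty (Fin d) := ⟨i0⟩
  set U := K.mulVec w with hU
  set V := K.mulVec (Pi.single i0 1) with hV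
  have hVn : vnorm V = 1 := by rw [hV, hK]; exact vnorm_single i0
  have hUn : vnorm U = vnorm w := hK w
  by_cases hna : IsNonarch k
  · have hsub : ∀ a b : k, ‖a - b‖ ≤ max ‖a‖ ‖b‖ := fun a b => by
      simpa [sub_eq_add_neg] using hna a (-b)
    unfold wnorm
    rw [if_pos hna]
    refine ciSup_le fun p => le_trans (hsub _ _) (max_le ?_ ?_)
    · rw [norm_mul]
      calc ‖U p.1‖ * ‖V p.2‖ ≤ vnorm U * vnorm V :=
            mul_le_mul (norm_le_vnorm U p.1) (norm_le_vnorm V p.2)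
              (norm_nonneg _) (vnorm_nonneg _)
        _ = vnorm w := by rw [hUn, hVn, mul_one]
    · rw [norm_mul]
      calc ‖U p.2‖ * ‖V p.1‖ ≤ vnorm U * vnorm V :=
            mul_le_mul (norm_le_vnorm U p.2) (norm_le_vnorm V p.1)
              (norm_nonneg _) (vnorm_nonneg _)
        _ = vnorm w := by rw [hUn, hVn, mul_one]
  · have hvs : ∀ v : Fin d → k, (∑ i, ‖v i‖ ^ 2) = (vnorm v) ^ 2 := fun v => by
      unfold vnorm
      rw [if_neg hna, Real.sq_sqrt (Finset.sum_nonneg fun i _ => sq_nonneg _)]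
    have H : ∀ α β : k, (∑ i, ‖α * U i + β * V i‖ ^ 2)
        = ‖α‖ ^ 2 * (∑ i, ‖w i‖ ^ 2) + ‖β‖ ^ 2 := by
      intro α β
      have h1 : (fun i => α * U i + β * V i)
          = K.mulVec (α • w + β • (Pi.single i0 1 : Fin d → k)) := by
        rw [Matrix.mulVec_add, Matrix.mulVec_smul, Matrix.mulVec_smul, ← hU, ← hV]
        funext i; simp
      have e1 : (∑ i, ‖α * U i + β * V i‖ ^ 2)
          = (vnorm fun i => α * U i + β * V i) ^ 2 := hvs _
      rw [h1, hK] at e1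
      rw [← hvs] at e1
      rw [e1]
      have hterm : ∀ i, ‖(α • w + β • (Pi.single i0 1 : Fin d → k)) i‖ ^ 2
          = ‖α‖ ^ 2 * ‖w i‖ ^ 2 + (if i = i0 then ‖β‖ ^ 2 else 0) := by
        intro i
        rcases eq_or_ne i i0 with h | h
        · subst h; simp [hw, norm_mul, mul_pow]
        · simp [Pi.single_eq_of_ne h, norm_mul, mul_pow, h]
      rw [Finset.sum_congr rfl fun i _ => hterm i, Finset.sum_add_distrib, ← Finset.mul_sum,
        Finset.sum_ite_eq' Finset.univ i0 (fun _ => ‖β‖ ^ 2)]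
      simp
    have SU : (∑ i, ‖U i‖ ^ 2) = ∑ i, ‖w i‖ ^ 2 := by
      have h := H 1 0; simpa using h
    have TV : (∑ i, ‖V i‖ ^ 2) = 1 := by
      have h := H 0 1; simpa using h
    have Hj : ∀ j, (∑ i, ‖U i * V j - U j * V i‖ ^ 2)
        = ‖V j‖ ^ 2 * (∑ i, ‖w i‖ ^ 2) + ‖U j‖ ^ 2 := by
      intro j
      calc (∑ i, ‖U i * V j - U j * V i‖ ^ 2)
          = ∑ i, ‖V j * U i + (-(U j)) * V i‖ ^ 2 :=
            Finset.sum_congr rfl fun i _ => by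
              rw [show V j * U i + (-(U j)) * V i = U i * V j - U j * V i by ring]
        _ = ‖V j‖ ^ 2 * (∑ i, ‖w i‖ ^ 2) + ‖-(U j)‖ ^ 2 := H _ _
        _ = ‖V j‖ ^ 2 * (∑ i, ‖w i‖ ^ 2) + ‖U j‖ ^ 2 := by rw [norm_neg]
    have hdouble : (∑ p : Fin d × Fin d, ‖U p.1 * V p.2 - U p.2 * V p.1‖ ^ 2)
        = 2 * ∑ i, ‖w i‖ ^ 2 := by
      rw [Fintype.sum_prod_type]
      calc (∑ i, ∑ j, ‖U i * V j - U j * V i‖ ^ 2)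
          = ∑ j, ∑ i, ‖U i * V j - U j * V i‖ ^ 2 := Finset.sum_comm
        _ = ∑ j, (‖V j‖ ^ 2 * (∑ i, ‖w i‖ ^ 2) + ‖U j‖ ^ 2) :=
            Finset.sum_congr rfl fun j _ => Hj j
        _ = (∑ j, ‖V j‖ ^ 2) * (∑ i, ‖w i‖ ^ 2) + ∑ j, ‖U j‖ ^ 2 := by
            rw [Finset.sum_add_distrib, ← Finset.sum_mul]
        _ = 2 * ∑ i, ‖w i‖ ^ 2 := by rw [TV, SU]; ring
    have hswap : (∑ p : Fin d × Fin d,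
          if p.2 < p.1 then ‖U p.1 * V p.2 - U p.2 * V p.1‖ ^ 2 else 0)
        = ∑ p : Fin d × Fin d,
          if p.1 < p.2 then ‖U p.1 * V p.2 - U p.2 * V p.1‖ ^ 2 else 0 := by
      apply Fintype.sum_equiv (Equiv.prodComm (Fin d) (Fin d))
      intro p
      simp only [Equiv.prodComm_apply, Prod.fst_swap, Prod.snd_swap]
      rw [norm_sub_rev]
      congr 1
    have htri : (∑ p : Fin d × Fin d, ‖U p.1 * V p.2 - U p.2 * V p.1‖ ^ 2)
        = (∑ p : Fin d × Fin d,
            if p.1 < p.2 then ‖U p.1 * V p.2 - U p.2 * V p.1‖ ^ 2 else 0)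
          + ∑ p : Fin d × Fin d,
            if p.2 < p.1 then ‖U p.1 * V p.2 - U p.2 * V p.1‖ ^ 2 else 0 := by
      rw [← Finset.sum_add_distrib]
      refine Finset.sum_congr rfl fun p _ => ?_
      rcases lt_trichotomy p.1 p.2 with h | h | h
      · rw [if_pos h, if_neg (asymm h), add_zero]
      · rw [if_neg (h ▸ lt_irrefl p.1), if_neg (h ▸ lt_irrefl p.1), h]
        simp
      · rw [if_neg (asymm h), if_pos h, zero_add]
    have hhalf : (∑ p : Fin d × Fin d,
        if p.1 < p.2 then ‖U p.1 * V p.2 - U p.2 * V p.1‖ ^ 2 else 0)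
        = ∑ i, ‖w i‖ ^ 2 := by linarith [htri, hswap, hdouble]
    have hwU : wnorm U V = Real.sqrt (∑ i, ‖w i‖ ^ 2) := by
      unfold wnorm
      rw [if_neg hna, hhalf]
    rw [hwU]
    unfold vnorm
    rw [if_neg hna]

end StatementHelpers

/-- a gap `|a₂(g)/a₁(g)| ≤ ε²` in the Cartan decomposition
`g = k(g) a(g) u(g)` implies `ε`-contraction, with attracting point
`v_g = [k(g)e₁]` and repelling hyperplane `H_g = [span(u(g)⁻¹e₂, …, u(g)⁻¹e_d)]`,
i.e. the kernel of the form `u(g)⁻¹·e₁^*` (whose coordinate vector is the first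
row of `u(g)`). -/
theorem statement_17
    {k : Type*} [NontriviallyNormedField k] [CompleteSpace k] [LocallyCompactSpace k]
    {d : ℕ} (hd : 2 ≤ d)
    (g kk aa uu : SLgp d k) (avals : Fin d → k)
    (hdecomp : g = kk * aa * uu)
    (hkK : kk ∈ Kiso d k) (huK : uu ∈ Kiso d k)
    (hdiag : (aa : Matrix (Fin d) (Fin d) k) = Matrix.diagonal avals)
    (hdec : ∀ i j : Fin d, i ≤ j → ‖avals j‖ ≤ ‖avals i‖)
    (ε : ℝ) (hε0 : 0 < ε) (hε1 : ε < 1)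
    (hratio : ‖avals ⟨1, by omega⟩‖ ≤ ε ^ 2 * ‖avals ⟨0, by omega⟩‖)
    -- the coordinate vector of the form `u(g)⁻¹·e₁^*` cutting out `H_g`
    (c : Fin d → k)
    (hc : c = fun j => (uu : Matrix (Fin d) (Fin d) k) ⟨0, by omega⟩ j)
    -- the attracting point `v_g = [k(g) e₁]`
    (vg : Projectivization k (Fin d → k))
    (hvg : vg = Projectivization.mk k
      ((kk : Matrix (Fin d) (Fin d) k).mulVec (Pi.single ⟨0, by omega⟩ 1))
      (sl_mulVec_ne_zero kk (single_one_ne_zero _))) :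
    (∀ Q : Projectivization k (Fin d → k), ε < pdeltaH Q c →
      pdelta (pact g Q) vg ≤
        (‖avals ⟨1, by omega⟩‖ / ‖avals ⟨0, by omega⟩‖) / pdeltaH Q c ∧
      (‖avals ⟨1, by omega⟩‖ / ‖avals ⟨0, by omega⟩‖) / pdeltaH Q c < ε) ∧
    EpsContractingSL g vg c ε := by
  classical
  set i0 : Fin d := ⟨0, by omega⟩ with hi0
  set i1 : Fin d := ⟨1, by omega⟩ with hi1
  have hdet : ∀ i, avals i ≠ 0 := by
    intro i h0i
    have hp : Matrix.det (aa : Matrix (Fin d) (Fin d) k) = 1 := aa.property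
    rw [hdiag, Matrix.det_diagonal, Finset.prod_eq_zero (Finset.mem_univ i) h0i] at hp
    exact zero_ne_one hp
  have hA1 : 0 < ‖avals i0‖ := norm_pos_iff.mpr (hdet i0)
  have main : ∀ Q : Projectivization k (Fin d → k), ε < pdeltaH Q c →
      pdelta (pact g Q) vg ≤ (‖avals i1‖ / ‖avals i0‖) / pdeltaH Q c ∧
      (‖avals i1‖ / ‖avals i0‖) / pdeltaH Q c < ε := by
    intro Q hQ
    have hxne : Q.rep ≠ 0 := Q.rep_nonzero
    set x : Fin d → k := Q.rep with hxdef
    set y : Fin d → k := (uu : Matrix (Fin d) (Fin d) k).mulVec x with hydef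
    set z : Fin d → k := (aa : Matrix (Fin d) (Fin d) k).mulVec y with hzdef
    have hvx : 0 < vnorm x := vnorm_pos hxne
    have hD : pdeltaH Q c = ‖y i0‖ / (vnorm c * vnorm x) := by
      unfold pdeltaH pdistH
      have e : (∑ i, c i * Q.rep i) = y i0 := by
        rw [hc, hydef]
        simp [Matrix.mulVec, dotProduct]
        rfl
      rw [e]
    have hDpos : (0 : ℝ) < pdeltaH Q c := lt_trans hε0 hQ
    have hy0 : y i0 ≠ 0 := by
      intro h
      rw [hD, h] at hDpos
      simp at hDpos
    have hY0 : 0 < ‖y i0‖ := norm_pos_iff.mpr hy0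
    -- vnorm c ≥ 1
    have hcv : (1 : ℝ) ≤ vnorm c := by
      set v0 : Fin d → k :=
        ((uu⁻¹ : SLgp d k) : Matrix (Fin d) (Fin d) k).mulVec (Pi.single i0 1) with hv0
      have huv : (uu : Matrix (Fin d) (Fin d) k).mulVec v0 = Pi.single i0 1 := by
        rw [hv0, Matrix.mulVec_mulVec, ← Matrix.SpecialLinearGroup.coe_mul, mul_inv_cancel,
          Matrix.SpecialLinearGroup.coe_one, Matrix.one_mulVec]
      have hv0n : vnorm v0 = 1 := by
        rw [← huK v0, huv]
        exact vnorm_single i0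
      have h1 : ‖∑ i, c i * v0 i‖ = 1 := by
        have e : (∑ i, c i * v0 i) = ((uu : Matrix (Fin d) (Fin d) k).mulVec v0) i0 := by
          rw [hc]
          simp [Matrix.mulVec, dotProduct]
        rw [e, huv, Pi.single_eq_same, norm_one]
      have h2 := norm_sum_mul_le c v0
      rw [h1, hv0n, mul_one] at h2
      exact h2
    have hz : ∀ i, z i = avals i * y i := by
      intro i
      rw [hzdef, hdiag, Matrix.mulVec_diagonal]
    have hgx : (g : Matrix (Fin d) (Fin d) k).mulVec x = (kk : Matrix (Fin d) (Fin d) k).mulVec z := by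
      rw [hdecomp, hzdef, hydef]
      simp [Matrix.SpecialLinearGroup.coe_mul, Matrix.mulVec_mulVec, mul_assoc]
    have hPQ : pact g Q = Projectivization.mk k ((g : Matrix (Fin d) (Fin d) k).mulVec x)
        (sl_mulVec_ne_zero g hxne) := by
      unfold pact
      conv_lhs => rw [← Q.mk_rep]
      rw [Projectivization.map_mk]
      rfl
    have hpd : pdelta (pact g Q) vg
        = pdist ((kk : Matrix (Fin d) (Fin d) k).mulVec z)
            ((kk : Matrix (Fin d) (Fin d) k).mulVec (Pi.single i0 1)) := by
      rw [hPQ, hvg, pdelta_mk, hgx]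
    set w : Fin d → k := z - (z i0) • (Pi.single i0 1 : Fin d → k) with hwdef
    have hw0 : w i0 = 0 := by
      rw [hwdef]
      simp [Pi.single_eq_same]
    have hzw : z = w + (z i0) • (Pi.single i0 1 : Fin d → k) := by
      funext i
      simp [hwdef]
    have hkkz : (kk : Matrix (Fin d) (Fin d) k).mulVec z
        = (kk : Matrix (Fin d) (Fin d) k).mulVec w
          + (z i0) • ((kk : Matrix (Fin d) (Fin d) k).mulVec (Pi.single i0 1)) := by
      conv_lhs => rw [hzw]
      rw [Matrix.mulVec_add, Matrix.mulVec_smul]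
    have hvy : vnorm y = vnorm x := huK x
    have hnum : wnorm ((kk : Matrix (Fin d) (Fin d) k).mulVec z)
        ((kk : Matrix (Fin d) (Fin d) k).mulVec (Pi.single i0 1))
        ≤ ‖avals i1‖ * vnorm x := by
      rw [hkkz, wnorm_add_smul]
      refine le_trans (key_bound hkK i0 w hw0) (le_trans (vnorm_le_mul (norm_nonneg _) w y ?_)
        (le_of_eq (by rw [hvy])))
      intro i
      rcases eq_or_ne i i0 with h | h
      · rw [h, hw0]
        simp
        positivity
      · have hwi : w i = avals i * y i := by
          rw [hwdef]
          simp [Pi.single_eq_of_ne h, hz i]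
        rw [hwi, norm_mul]
        have h1i : i1 ≤ i := by
          rw [Fin.le_def]
          have : i.val ≠ 0 := fun h0 => h (Fin.ext h0)
          simp only [hi1]
          omega
        exact mul_le_mul_of_nonneg_right (hdec i1 i h1i) (norm_nonneg _)
    have hden : ‖avals i0‖ * ‖y i0‖ ≤ vnorm ((kk : Matrix (Fin d) (Fin d) k).mulVec z) := by
      rw [hkK z]
      calc ‖avals i0‖ * ‖y i0‖ = ‖z i0‖ := by rw [hz i0, norm_mul]
        _ ≤ vnorm z := norm_le_vnorm z i0
    have hdenpos : 0 < ‖avals i0‖ * ‖y i0‖ := mul_pos hA1 hY0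
    have hs1 : vnorm ((kk : Matrix (Fin d) (Fin d) k).mulVec (Pi.single i0 1)) = 1 := by
      rw [hkK]
      exact vnorm_single i0
    have hfinal1 : pdelta (pact g Q) vg
        ≤ (‖avals i1‖ * vnorm x) / (‖avals i0‖ * ‖y i0‖) := by
      rw [hpd]
      unfold pdist
      rw [hs1, mul_one]
      exact div_le_div₀ (mul_nonneg (norm_nonneg _) (vnorm_nonneg x)) hnum hdenpos hden
    have hrepr : (‖avals i1‖ / ‖avals i0‖) / pdeltaH Q c
        = (‖avals i1‖ * (vnorm c * vnorm x)) / (‖avals i0‖ * ‖y i0‖) := by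
      have hcv0 : vnorm c ≠ 0 := ne_of_gt (lt_of_lt_of_le one_pos hcv)
      rw [hD]
      field_simp
    have hle2 : (‖avals i1‖ * vnorm x) / (‖avals i0‖ * ‖y i0‖)
        ≤ (‖avals i1‖ / ‖avals i0‖) / pdeltaH Q c := by
      rw [hrepr, div_le_div_iff_of_pos_right hdenpos]
      exact mul_le_mul_of_nonneg_left (le_mul_of_one_le_left (le_of_lt hvx) hcv)
        (norm_nonneg _)
    refine ⟨hfinal1.trans hle2, ?_⟩
    have hr2 : ‖avals i1‖ / ‖avals i0‖ ≤ ε ^ 2 := (div_le_iff₀ hA1).mpr hratio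
    calc (‖avals i1‖ / ‖avals i0‖) / pdeltaH Q c ≤ ε ^ 2 / pdeltaH Q c := by
          rw [div_le_div_iff_of_pos_right hDpos]
          exact hr2
      _ < ε ^ 2 / ε := div_lt_div_of_pos_left (by positivity) hε0 hQ
      _ = ε := by rw [pow_two, mul_div_assoc, div_self (ne_of_gt hε0), mul_one]
  exact ⟨fun Q hQ => main Q hQ, fun Q hQ => lt_of_le_of_lt (main Q hQ).1 (main Q hQ).2⟩
end

section
/- Let Γ be a subsemigroup of GL(V) acting irreducibly on V (no nonzero proper linear subspace of V is invariant under Γ) and contracting: there exist γ_n ∈ Γ and r_n ∈ k with ‖r_n γ_n‖ = 1 such that a subsequence of (r_n γ_n) converges in End(V) to a rank-one endomorphism. Then Γ contains a proximal element. -/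
open Filter

noncomputable section

variable {k : Type*} [NontriviallyNormedField k]
  {V : Type*} [NormedAddCommGroup V] [NormedSpace k V]

/-- `γ ∈ GL(V)` is proximal: it has an eigenvalue `lam ∈ k` with a one-dimensional
eigenline `L` and a `γ`-invariant complement `H`, such that the spectral radius
`lim ‖(γ|_H)ⁿ‖^{1/n}` of the restriction of `γ` to `H` is `< |lam|`. -/
def IsProximal (γ : V ≃L[k] V) : Prop :=
  ∃ (lam : k) (L H : Submodule k V),
    Module.finrank k L = 1 ∧
    (∀ v ∈ L, γ v = lam • v) ∧
    (∀ v ∈ H, γ v ∈ H) ∧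
    IsCompl L H ∧
    ∃ (T : H →L[k] H) (ρ : ℝ),
      (∀ v : H, (T v : V) = γ v) ∧
      Tendsto (fun n : ℕ => ‖T ^ n‖ ^ (1 / (n : ℝ))) atTop (nhds ρ) ∧
      ρ < ‖lam‖

end


set_option maxHeartbeats 1600000

section Aux

lemma spectral_limit {k : Type*} [NontriviallyNormedField k] {H : Type*} [NormedAddCommGroup H]
    [NormedSpace k H] [Nontrivial H]
    (T Tinv : H →L[k] H) (h1 : T * Tinv = 1) (h2 : Tinv * T = 1) :
    ∃ ρ : ℝ, Tendsto (fun n : ℕ => ‖T ^ n‖ ^ (1 / (n : ℝ))) atTop (nhds ρ) ∧ ρ ≤ ‖T‖ := by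
  have hcomm : Commute T Tinv := by
    show T * Tinv = Tinv * T
    rw [h1, h2]
  have hpow : ∀ n : ℕ, T ^ n * Tinv ^ n = 1 := by
    intro n
    rw [← hcomm.mul_pow, h1, one_pow]
  have hone : (1 : H →L[k] H) ≠ 0 := by
    intro h
    obtain ⟨x, hx⟩ := exists_ne (0 : H)
    have := congrArg (fun f : H →L[k] H => f x) h
    simp at this
    exact hx this
  have hTn : ∀ n : ℕ, 0 < ‖T ^ n‖ := by
    intro n
    rcases (norm_nonneg (T ^ n)).lt_or_eq with h | h
    · exact h
    · exfalso
      have : T ^ n = 0 := by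
        rwa [eq_comm, ContinuousLinearMap.opNorm_zero_iff] at h
      apply hone
      rw [← hpow n, this, zero_mul]
  have hTinvn : ∀ n : ℕ, 0 < ‖Tinv ^ n‖ := by
    intro n
    rcases (norm_nonneg (Tinv ^ n)).lt_or_eq with h | h
    · exact h
    · exfalso
      have : Tinv ^ n = 0 := by
        rwa [eq_comm, ContinuousLinearMap.opNorm_zero_iff] at h
      apply hone
      rw [← hpow n, this, mul_zero]
  set u : ℕ → ℝ := fun n => Real.log ‖T ^ n‖ with hu
  have hsub : Subadditive u := by
    intro m n
    have h1' : ‖T ^ (m + n)‖ ≤ ‖T ^ m‖ * ‖T ^ n‖ := by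
      rw [pow_add]; exact norm_mul_le _ _
    calc u (m + n) ≤ Real.log (‖T ^ m‖ * ‖T ^ n‖) :=
          Real.log_le_log (hTn _) h1'
      _ = u m + u n := Real.log_mul (hTn m).ne' (hTn n).ne'
  have hTinvpos : 0 < ‖Tinv‖ := by simpa using hTinvn 1
  have hlow : ∀ n : ℕ, n ≠ 0 → -Real.log ‖Tinv‖ ≤ u n / n := by
    intro n hn
    have hn' : 0 < (n : ℝ) := by positivity
    rw [le_div_iff₀ hn']
    have h1' : (1 : ℝ) ≤ ‖T ^ n‖ * ‖Tinv ^ n‖ := by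
      calc (1 : ℝ) = ‖(1 : H →L[k] H)‖ := (ContinuousLinearMap.norm_id).symm
        _ = ‖T ^ n * Tinv ^ n‖ := by rw [hpow n]
        _ ≤ ‖T ^ n‖ * ‖Tinv ^ n‖ := norm_mul_le _ _
    have h2' : ‖Tinv ^ n‖ ≤ ‖Tinv‖ ^ n := norm_pow_le' Tinv (Nat.pos_of_ne_zero hn)
    have h3' : (‖Tinv‖ ^ n)⁻¹ ≤ ‖T ^ n‖ := by
      rw [inv_le_iff_one_le_mul₀ (by positivity)]
      calc (1:ℝ) ≤ ‖T ^ n‖ * ‖Tinv ^ n‖ := h1'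
        _ ≤ ‖T ^ n‖ * ‖Tinv‖ ^ n := by
            exact mul_le_mul_of_nonneg_left h2' (norm_nonneg _)
    have := Real.log_le_log (by positivity) h3'
    rw [Real.log_inv, Real.log_pow] at this
    nlinarith [this]
  have hbdd : BddBelow (Set.range fun n : ℕ => u n / n) := by
    refine ⟨min 0 (-Real.log ‖Tinv‖), ?_⟩
    rintro x ⟨n, rfl⟩
    rcases eq_or_ne n 0 with rfl | hn
    · simp
    · exact le_trans (min_le_right _ _) (hlow n hn)
  refine ⟨Real.exp hsub.lim, ?_, ?_⟩
  · have htend := hsub.tendsto_lim hbdd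
    have := (Real.continuous_exp.tendsto _).comp htend
    refine this.congr' ?_
    filter_upwards [eventually_ge_atTop 1] with n hn
    have hn' : (0:ℝ) < n := by exact_mod_cast hn
    simp only [Function.comp]
    rw [Real.rpow_def_of_pos (hTn n), div_eq_mul_inv, one_div, mul_comm]
  · have hle := hsub.lim_le_div hbdd (n := 1) one_ne_zero
    simp only [Nat.cast_one, div_one, hu, pow_one] at hle
    calc Real.exp hsub.lim ≤ Real.exp (Real.log ‖T‖) := Real.exp_le_exp.mpr hle
      _ = ‖T‖ := Real.exp_log (by simpa using hTn 1)



lemma eigen_perturb {k : Type*} [NontriviallyNormedField k] {E : Type*} [NormedAddCommGroup E]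
    [NormedSpace k E] [CompleteSpace E]
    (e : E) (φ : E →L[k] k) (hφe : φ e = 1) (c : k) (hc : c ≠ 0) :
    ∀ ε' > (0:ℝ), ∃ δ > (0:ℝ), ∀ S : E →L[k] E,
      ‖S - c • φ.smulRight e‖ ≤ δ →
      ∃ (lam : k) (h : E), φ h = 0 ∧ ‖h‖ ≤ ε' ∧ ‖lam - c‖ ≤ ‖c‖ / 2 ∧
        S (e + h) = lam • (e + h) := by
  intro ε' hε'
  set m : ℝ := ‖φ‖ with hm
  set a : ℝ := ‖e‖ with ha
  set nc : ℝ := ‖c‖ with hnc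
  have hm0 : 0 ≤ m := norm_nonneg _
  have ha0 : 0 ≤ a := norm_nonneg _
  have hnc0 : 0 < nc := norm_pos_iff.mpr hc
  set C1 : ℝ := m * (a + 1) with hC1
  set C2 : ℝ := 2 / nc * ((a + 1) * (1 + m * a)) with hC2
  set C3 : ℝ := 2 / nc * (1 + m * a) + 4 / nc ^ 2 * (m * ((a + 1) * (1 + m * a))) with hC3
  have hC10 : 0 ≤ C1 := by positivity
  have hC20 : 0 ≤ C2 := by positivity
  have hC30 : 0 ≤ C3 := by positivity
  set δ : ℝ := min 1 (min (nc / 2 / (C1 + 1)) (min (min ε' 1 / (C2 + 1)) (1 / 2 / (C3 + 1)))) with hδ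
  have hδ0 : 0 < δ := by
    apply lt_min one_pos
    apply lt_min (by positivity)
    apply lt_min (by positivity) (by positivity)
  refine ⟨δ, hδ0, ?_⟩
  intro S hS
  -- basic consequences of the choice of δ
  have hδ1 : δ ≤ 1 := min_le_left _ _
  have hH1 : δ * C1 ≤ nc / 2 := by
    have h1 : δ ≤ nc / 2 / (C1 + 1) := le_trans (min_le_right _ _) (min_le_left _ _)
    rw [le_div_iff₀ (by positivity)] at h1
    nlinarith
  have hH2 : δ * C2 ≤ min ε' 1 := by
    have h1 : δ ≤ min ε' 1 / (C2 + 1) :=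
      le_trans (min_le_right _ _) (le_trans (min_le_right _ _) (min_le_left _ _))
    rw [le_div_iff₀ (by positivity)] at h1
    nlinarith [lt_min hε' one_pos]
  have hH3 : δ * C3 ≤ 1 / 2 := by
    have h1 : δ ≤ 1 / 2 / (C3 + 1) :=
      le_trans (min_le_right _ _) (le_trans (min_le_right _ _) (min_le_right _ _))
    rw [le_div_iff₀ (by positivity)] at h1
    nlinarith
  clear_value δ
  set B : E →L[k] E := c • φ.smulRight e with hB
  have hEbound : ∀ y : E, ‖(S - B) y‖ ≤ δ * ‖y‖ := by
    intro y
    calc ‖(S - B) y‖ ≤ ‖S - B‖ * ‖y‖ := (S - B).le_opNorm y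
      _ ≤ δ * ‖y‖ := mul_le_mul_of_nonneg_right hS (norm_nonneg y)
  -- the eigenvalue candidate
  set lam : E → k := fun x => c + φ ((S - B) (e + x)) with hlamdef
  set G : E → E := fun x => (S - B) (e + x) - φ ((S - B) (e + x)) • e with hGdef
  have hex : ∀ x : E, ‖x‖ ≤ 1 → ‖e + x‖ ≤ a + 1 := by
    intro x hx
    calc ‖e + x‖ ≤ ‖e‖ + ‖x‖ := norm_add_le _ _
      _ ≤ a + 1 := by rw [← ha]; linarith
  have hφSB : ∀ y : E, ‖φ ((S - B) y)‖ ≤ m * (δ * ‖y‖) :=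
    fun y => le_trans (φ.le_opNorm _) (mul_le_mul_of_nonneg_left (hEbound _) hm0)
  have hlam_c : ∀ x : E, ‖x‖ ≤ 1 → ‖lam x - c‖ ≤ δ * C1 := by
    intro x hx
    have h0 : lam x - c = φ ((S - B) (e + x)) := by simp [hlamdef]
    rw [h0]
    calc ‖φ ((S - B) (e + x))‖ ≤ m * (δ * ‖e + x‖) := hφSB _
      _ ≤ m * (δ * (a + 1)) :=
          mul_le_mul_of_nonneg_left (mul_le_mul_of_nonneg_left (hex x hx) hδ0.le) hm0
      _ = δ * C1 := by rw [hC1]; ring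
  have hlam_lb : ∀ x : E, ‖x‖ ≤ 1 → nc / 2 ≤ ‖lam x‖ := by
    intro x hx
    have h1 := hlam_c x hx
    have h2 : ‖c‖ - ‖lam x‖ ≤ ‖lam x - c‖ := by
      rw [norm_sub_rev]; exact norm_sub_norm_le _ _
    rw [← hnc] at h2
    linarith
  have hlam_ne : ∀ x : E, ‖x‖ ≤ 1 → lam x ≠ 0 := by
    intro x hx h0
    have := hlam_lb x hx
    rw [h0, norm_zero] at this
    linarith
  have hlaminv : ∀ x : E, ‖x‖ ≤ 1 → ‖(lam x)⁻¹‖ ≤ 2 / nc := by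
    intro x hx
    rw [norm_inv, show (2:ℝ)/nc = (nc/2)⁻¹ by rw [inv_div]]
    exact inv_anti₀ (by positivity) (hlam_lb x hx)
  have hG_bound : ∀ x : E, ‖x‖ ≤ 1 → ‖G x‖ ≤ δ * ((a + 1) * (1 + m * a)) := by
    intro x hx
    have h1 : ‖G x‖ ≤ ‖(S - B) (e + x)‖ + ‖φ ((S - B) (e + x))‖ * a := by
      calc ‖G x‖ ≤ ‖(S - B) (e + x)‖ + ‖φ ((S - B) (e + x)) • e‖ := norm_sub_le _ _
        _ = ‖(S - B) (e + x)‖ + ‖φ ((S - B) (e + x))‖ * a := by rw [norm_smul, ha]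
    have h2 : ‖(S - B) (e + x)‖ ≤ δ * (a + 1) :=
      le_trans (hEbound _) (mul_le_mul_of_nonneg_left (hex x hx) hδ0.le)
    have h3 : ‖φ ((S - B) (e + x))‖ ≤ m * (δ * (a + 1)) :=
      le_trans (hφSB _) (mul_le_mul_of_nonneg_left (mul_le_mul_of_nonneg_left (hex x hx) hδ0.le) hm0)
    have h4 : ‖φ ((S - B) (e + x))‖ * a ≤ m * (δ * (a + 1)) * a :=
      mul_le_mul_of_nonneg_right h3 ha0
    have h5 : δ * (a + 1) + m * (δ * (a + 1)) * a = δ * ((a + 1) * (1 + m * a)) := by ring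
    linarith
  have hG_lip : ∀ x x' : E, ‖G x - G x'‖ ≤ δ * (1 + m * a) * ‖x - x'‖ := by
    intro x x'
    have h1 : (S - B) (e + x) - (S - B) (e + x') = (S - B) (x - x') := by
      rw [← map_sub]; congr 1; abel
    have h2 : G x - G x' = (S - B) (x - x') - φ ((S - B) (x - x')) • e := by
      simp only [hGdef]
      rw [← h1, map_sub φ, sub_smul]
      abel
    rw [h2]
    have h3 : ‖(S - B) (x - x')‖ ≤ δ * ‖x - x'‖ := hEbound _
    have h4 : ‖φ ((S - B) (x - x'))‖ ≤ m * (δ * ‖x - x'‖) := hφSB _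
    calc ‖(S - B) (x - x') - φ ((S - B) (x - x')) • e‖
        ≤ ‖(S - B) (x - x')‖ + ‖φ ((S - B) (x - x'))‖ * a := by
          refine le_trans (norm_sub_le _ _) ?_
          rw [norm_smul, ha]
      _ ≤ δ * ‖x - x'‖ + m * (δ * ‖x - x'‖) * a := by
          have h5 : ‖φ ((S - B) (x - x'))‖ * a ≤ m * (δ * ‖x - x'‖) * a :=
            mul_le_mul_of_nonneg_right h4 ha0
          linarith
      _ = δ * (1 + m * a) * ‖x - x'‖ := by ring
  have hlam_lip : ∀ x x' : E, ‖lam x - lam x'‖ ≤ m * (δ * ‖x - x'‖) := by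
    intro x x'
    have h0 : (S - B) (e + x) - (S - B) (e + x') = (S - B) (x - x') := by
      rw [← map_sub]; congr 1; abel
    have h1 : lam x - lam x' = φ ((S - B) (x - x')) := by
      simp only [hlamdef]
      rw [← h0, map_sub φ]
      ring
    rw [h1]; exact hφSB _
  set F : E → E := fun x => (lam x)⁻¹ • G x with hFdef
  have hφG : ∀ x : E, φ (G x) = 0 := by
    intro x
    simp [hGdef, map_sub, hφe]
  have hφF : ∀ x : E, φ (F x) = 0 := by
    intro x
    simp [hFdef, map_smul, hφG x]
  have hFbound : ∀ x : E, ‖x‖ ≤ 1 → ‖F x‖ ≤ δ * C2 := by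
    intro x hx
    rw [hFdef]
    simp only []
    rw [norm_smul]
    calc ‖(lam x)⁻¹‖ * ‖G x‖ ≤ (2 / nc) * (δ * ((a + 1) * (1 + m * a))) := by
          exact mul_le_mul (hlaminv x hx) (hG_bound x hx) (norm_nonneg _) (by positivity)
      _ = δ * C2 := by rw [hC2]; ring
  have hFlip : ∀ x x' : E, ‖x‖ ≤ 1 → ‖x'‖ ≤ 1 →
      ‖F x - F x'‖ ≤ 1 / 2 * ‖x - x'‖ := by
    intro x x' hx hx'
    have hsplit : F x - F x' = (lam x)⁻¹ • (G x - G x') + ((lam x)⁻¹ - (lam x')⁻¹) • G x' := by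
      simp only [hFdef, smul_sub, sub_smul]
      abel
    have hinvdiff : ‖(lam x)⁻¹ - (lam x')⁻¹‖ ≤ (2 / nc) * (2 / nc) * (m * (δ * ‖x - x'‖)) := by
      rw [inv_sub_inv (hlam_ne x hx) (hlam_ne x' hx')]
      rw [norm_div, norm_mul]
      have h1 : ‖lam x' - lam x‖ ≤ m * (δ * ‖x - x'‖) := by
        rw [norm_sub_rev]
        exact hlam_lip x x'
      have h2 : (‖lam x‖ * ‖lam x'‖)⁻¹ ≤ (2 / nc) * (2 / nc) := by
        rw [mul_inv]
        have e1 : ‖lam x‖⁻¹ ≤ 2 / nc := by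
          rw [← norm_inv]; exact hlaminv x hx
        have e2 : ‖lam x'‖⁻¹ ≤ 2 / nc := by
          rw [← norm_inv]; exact hlaminv x' hx'
        exact mul_le_mul e1 e2 (by positivity) (by positivity)
      rw [div_eq_mul_inv]
      calc ‖lam x' - lam x‖ * (‖lam x‖ * ‖lam x'‖)⁻¹
          ≤ (m * (δ * ‖x - x'‖)) * ((2 / nc) * (2 / nc)) := by
            exact mul_le_mul h1 h2 (by positivity) (by positivity)
        _ = (2 / nc) * (2 / nc) * (m * (δ * ‖x - x'‖)) := by ring
    rw [hsplit]
    have t1 : ‖(lam x)⁻¹ • (G x - G x')‖ ≤ (2 / nc) * (δ * (1 + m * a) * ‖x - x'‖) := by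
      rw [norm_smul]
      exact mul_le_mul (hlaminv x hx) (hG_lip x x') (norm_nonneg _) (by positivity)
    have t2 : ‖((lam x)⁻¹ - (lam x')⁻¹) • G x'‖ ≤
        ((2 / nc) * (2 / nc) * (m * (δ * ‖x - x'‖))) * (δ * ((a + 1) * (1 + m * a))) := by
      rw [norm_smul]
      exact mul_le_mul hinvdiff (hG_bound x' hx') (norm_nonneg _) (by positivity)
    have hbig := norm_add_le ((lam x)⁻¹ • (G x - G x')) (((lam x)⁻¹ - (lam x')⁻¹) • G x')
    have key : (2 / nc) * (δ * (1 + m * a) * ‖x - x'‖) +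
        ((2 / nc) * (2 / nc) * (m * (δ * ‖x - x'‖))) * (δ * ((a + 1) * (1 + m * a)))
        ≤ 1 / 2 * ‖x - x'‖ := by
      have hnn : 0 ≤ ‖x - x'‖ := norm_nonneg _
      have expand : (2 / nc) * (δ * (1 + m * a) * ‖x - x'‖) +
          ((2 / nc) * (2 / nc) * (m * (δ * ‖x - x'‖))) * (δ * ((a + 1) * (1 + m * a)))
          = (δ * (2 / nc * (1 + m * a)) + (δ * δ) * (4 / nc ^ 2 * (m * ((a + 1) * (1 + m * a))))) * ‖x - x'‖ := by
        field_simp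
        ring
      rw [expand]
      have hδδ : δ * δ ≤ δ := by nlinarith
      have : δ * (2 / nc * (1 + m * a)) + (δ * δ) * (4 / nc ^ 2 * (m * ((a + 1) * (1 + m * a)))) ≤ δ * C3 := by
        rw [hC3]
        have h4 : 0 ≤ 4 / nc ^ 2 * (m * ((a + 1) * (1 + m * a))) := by positivity
        nlinarith
      nlinarith
    linarith
  -- Banach fixed point on the closed set {x | φ x = 0 ∧ ‖x‖ ≤ 1}
  set s : Set E := {x : E | φ x = 0 ∧ ‖x‖ ≤ 1} with hs
  have hclosed : IsClosed s := by
    apply IsClosed.inter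
    · exact isClosed_eq (map_continuous φ) continuous_const
    · exact isClosed_le continuous_norm continuous_const
  haveI : CompleteSpace s := hclosed.completeSpace_coe
  haveI : Nonempty s := ⟨⟨0, by simp [hs]⟩⟩
  have hδC2le1 : δ * C2 ≤ 1 := le_trans hH2 (min_le_right _ _)
  set f : s → s := fun x => ⟨F x.1, hφF x.1, le_trans (hFbound x.1 x.2.2) hδC2le1⟩ with hf
  have hcontr : ContractingWith (1/2 : NNReal) f := by
    constructor
    · rw [← NNReal.coe_lt_coe]; norm_num
    · apply LipschitzWith.of_dist_le_mul
      intro x y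
      rw [Subtype.dist_eq, Subtype.dist_eq, dist_eq_norm, dist_eq_norm]
      have := hFlip x.1 y.1 x.2.2 y.2.2
      calc ‖(f x : E) - (f y : E)‖ = ‖F x.1 - F y.1‖ := rfl
        _ ≤ 1 / 2 * ‖x.1 - y.1‖ := this
        _ = ((1/2 : NNReal) : ℝ) * ‖(x : E) - (y : E)‖ := by norm_num
  set hfix : s := ContractingWith.fixedPoint f hcontr with hfixdef
  have hfp : F (hfix : E) = (hfix : E) := by
    have := hcontr.fixedPoint_isFixedPt
    exact congrArg Subtype.val this
  set h : E := (hfix : E) with hh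
  have hφh : φ h = 0 := hfix.2.1
  have hh1 : ‖h‖ ≤ 1 := hfix.2.2
  refine ⟨lam h, h, hφh, ?_, ?_, ?_⟩
  · -- ‖h‖ ≤ ε'
    rw [← hfp]
    exact le_trans (hFbound h hh1) (le_trans hH2 (min_le_left _ _))
  · -- eigenvalue close to c
    exact le_trans (hlam_c h hh1) hH1
  · -- the eigenvector equation
    have hne := hlam_ne h hh1
    have h1' : lam h • F h = G h := by
      show lam h • ((lam h)⁻¹ • G h) = G h
      exact smul_inv_smul₀ hne _
    have hGh : G h = lam h • h := by
      rw [← h1', hfp]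
    have hsplit : S (e + h) = B (e + h) + (S - B) (e + h) := by
      simp
    have hBeh : B (e + h) = c • e := by
      rw [hB]
      simp [hφe, hφh]
    have hSBeh : (S - B) (e + h) = (lam h - c) • e + lam h • h := by
      have h1 : (S - B) (e + h) = φ ((S - B) (e + h)) • e + G h := by
        simp only [hGdef]
        abel
      rw [h1, hGh]
      congr 2
      simp [hlamdef]
    rw [hsplit, hBeh, hSBeh, smul_add, sub_smul]
    abel

end Aux

/-- an irreducible contracting subsemigroup of `GL(V)` contains a
proximal element. -/
theorem statement_19
    {k : Type*} [NontriviallyNormedField k] [CompleteSpace k] [LocallyCompactSpace k]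
    {V : Type*} [NormedAddCommGroup V] [NormedSpace k V] [FiniteDimensional k V]
    (hdim : 2 ≤ Module.finrank k V)
    (Γ : Set (V ≃L[k] V))
    (hsemi : ∀ a ∈ Γ, ∀ b ∈ Γ, a * b ∈ Γ)
    -- Γ acts irreducibly
    (hirr : ∀ W : Submodule k V, W ≠ ⊥ → W ≠ ⊤ → ¬ ∀ g ∈ Γ, ∀ v ∈ W, g v ∈ W)
    -- Γ is contracting
    (hcontr : ∃ (γ : ℕ → V ≃L[k] V) (r : ℕ → k) (φ : ℕ → ℕ) (A : V →L[k] V),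
      (∀ n, γ n ∈ Γ) ∧
      (∀ n, ‖r n • ((γ n : V ≃L[k] V) : V →L[k] V)‖ = 1) ∧
      StrictMono φ ∧
      Tendsto (fun n => r (φ n) • ((γ (φ n) : V ≃L[k] V) : V →L[k] V)) atTop (nhds A) ∧
      Module.finrank k (LinearMap.range (A : V →ₗ[k] V)) = 1) :
    ∃ γ ∈ Γ, IsProximal γ := by
  classical
  obtain ⟨γs, r, φs, A, hγΓ, hnorm1, hmono, hconv, hrank⟩ := hcontr
  haveI : CompleteSpace V := FiniteDimensional.complete k V
  -- a vector spanning the range of A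
  have hrange_ne : LinearMap.range (A : V →ₗ[k] V) ≠ ⊥ := by
    intro h
    rw [h] at hrank
    simp at hrank
  obtain ⟨x₀, hx₀mem, hx₀ne⟩ := Submodule.exists_mem_ne_zero_of_ne_bot hrange_ne
  have hspan : Submodule.span k {x₀} = LinearMap.range (A : V →ₗ[k] V) := by
    apply Submodule.eq_of_le_of_finrank_eq
    · rw [Submodule.span_le]
      simpa using hx₀mem
    · rw [finrank_span_singleton hx₀ne, hrank]
  -- a continuous functional ξ with ξ x₀ = 1
  obtain ⟨f, hf⟩ : ∃ f : Module.Dual k V, f x₀ ≠ 0 := by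
    by_contra hcon
    push_neg at hcon
    exact hx₀ne ((Module.forall_dual_apply_eq_zero_iff k x₀).mp hcon)
  set ξ : V →L[k] k := LinearMap.toContinuousLinearMap ((f x₀)⁻¹ • f) with hξ
  have hξx₀ : ξ x₀ = 1 := by
    rw [hξ]
    simp [inv_mul_cancel₀ hf]
  set φt : V →L[k] k := ξ.comp A with hφt
  have hAx : ∀ x : V, A x = φt x • x₀ := by
    intro x
    have hmem : A x ∈ Submodule.span k {x₀} := by
      rw [hspan]; exact ⟨x, rfl⟩
    obtain ⟨t, ht⟩ := Submodule.mem_span_singleton.mp hmem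
    have : φt x = t := by
      rw [hφt]
      simp only [ContinuousLinearMap.comp_apply]
      rw [← ht, map_smul, hξx₀, smul_eq_mul, mul_one]
    rw [this, ← ht]
  -- find g ∈ Γ with φt (g x₀) ≠ 0
  have hΓne : ∃ g0, g0 ∈ Γ := ⟨γs 0, hγΓ 0⟩
  obtain ⟨g, hgΓ, hgc⟩ : ∃ g ∈ Γ, φt (g x₀) ≠ 0 := by
    by_contra hcon
    push_neg at hcon
    set O : Set V := {y | ∃ g ∈ Γ, g x₀ = y} with hO
    set W : Submodule k V := Submodule.span k O with hW
    have hWinv : ∀ g ∈ Γ, ∀ u ∈ W, g u ∈ W := by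
      intro g hg u hu
      induction hu using Submodule.span_induction with
      | mem y hy =>
        obtain ⟨g', hg', rfl⟩ := hy
        exact Submodule.subset_span ⟨g * g', hsemi g hg g' hg', rfl⟩
      | zero => simpa using W.zero_mem
      | add a b _ _ iha ihb => rw [map_add]; exact W.add_mem iha ihb
      | smul t a _ iha => rw [map_smul]; exact W.smul_mem t iha
    have hWne : W ≠ ⊥ := by
      intro hbot
      obtain ⟨g0, hg0⟩ := hΓne
      have hmem : (g0 : V ≃L[k] V) x₀ ∈ W := Submodule.subset_span ⟨g0, hg0, rfl⟩
      rw [hbot, Submodule.mem_bot] at hmem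
      apply hx₀ne
      have := g0.injective (by simpa using hmem : g0 x₀ = g0 0)
      exact this
    have hWtop : W = ⊤ := by
      by_contra hne
      exact hirr W hWne hne hWinv
    have hker : ∀ x : V, φt x = 0 := by
      intro x
      have hx : x ∈ W := by rw [hWtop]; trivial
      have hle : W ≤ LinearMap.ker (φt : V →ₗ[k] k) := by
        rw [hW, Submodule.span_le]
        rintro y ⟨g', hg', rfl⟩
        exact LinearMap.mem_ker.mpr (hcon g' hg')
      exact LinearMap.mem_ker.mp (hle hx)
    have hAbot : LinearMap.range (A : V →ₗ[k] V) = ⊥ := by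
      rw [eq_bot_iff]
      rintro y ⟨x, rfl⟩
      have : A x = 0 := by rw [hAx x, hker x, zero_smul]
      simpa [this]
    rw [hAbot] at hrank
    simp at hrank
  set gc : V →L[k] V := (g : V →L[k] V) with hgcdef
  set c : k := φt (gc x₀) with hcdef
  have hc : c ≠ 0 := hgc
  have hc0 : (0:ℝ) < ‖c‖ := norm_pos_iff.mpr hc
  set e : V := x₀ with hedef
  set φ₀ : V →L[k] k := c⁻¹ • (φt.comp gc) with hφ₀
  have hφ₀e : φ₀ e = 1 := by
    rw [hφ₀]
    simp only [ContinuousLinearMap.smul_apply, ContinuousLinearMap.comp_apply, smul_eq_mul]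
    rw [hedef, ← hcdef, inv_mul_cancel₀ hc]
  set B : V →L[k] V := c • φ₀.smulRight e with hBdef
  have hBeq : B = A.comp gc := by
    apply ContinuousLinearMap.ext
    intro x
    rw [hBdef]
    simp only [ContinuousLinearMap.smul_apply, ContinuousLinearMap.smulRight_apply,
      ContinuousLinearMap.comp_apply, hφ₀, smul_eq_mul]
    rw [hAx (gc x), smul_smul, mul_inv_cancel_left₀ hc]
  -- the transpose operator
  set Tt : (V →L[k] V) →L[k] ((V →L[k] k) →L[k] (V →L[k] k)) :=
    (ContinuousLinearMap.compL k V V k).flip with hTtdef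
  have hTt_apply : ∀ (X : V →L[k] V) (ψ : V →L[k] k) (x : V), (Tt X ψ) x = ψ (X x) := by
    intros; rfl
  set ev : (V →L[k] k) →L[k] k := ContinuousLinearMap.apply k k e with hevdef
  have hev_apply : ∀ ψ : V →L[k] k, ev ψ = ψ e := by intros; rfl
  have hevφ₀ : ev φ₀ = 1 := hφ₀e
  have hBt : Tt B = c • ev.smulRight φ₀ := by
    apply ContinuousLinearMap.ext
    intro ψ
    apply ContinuousLinearMap.ext
    intro x
    rw [hTt_apply]
    simp only [ContinuousLinearMap.smul_apply, ContinuousLinearMap.smulRight_apply,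
      hBdef, hev_apply, smul_eq_mul]
    simp only [map_smul, smul_eq_mul]
    ring
  have hTtle : ∀ X : V →L[k] V, ‖Tt X‖ ≤ ‖X‖ := by
    intro X
    apply ContinuousLinearMap.opNorm_le_bound _ (norm_nonneg X)
    intro ψ
    have : Tt X ψ = ψ.comp X := rfl
    rw [this, mul_comm]
    exact ContinuousLinearMap.opNorm_comp_le ψ X
  -- choose the parameters
  set εη : ℝ := min (1/2) (‖c‖ / (4 * (‖c‖ * ‖e‖ + 1))) with hεηdef
  have hεηpos : 0 < εη := lt_min (by norm_num) (by positivity)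
  have hεηhalf : εη ≤ 1/2 := min_le_left _ _
  set ε1 : ℝ := ‖c‖ / 8 with hε1def
  obtain ⟨δ₁, hδ₁pos, Hprimal⟩ := eigen_perturb e φ₀ hφ₀e c hc 1 one_pos
  obtain ⟨δ₂, hδ₂pos, Hdual⟩ := eigen_perturb φ₀ ev hevφ₀ c hc εη hεηpos
  set δmin : ℝ := min δ₁ (min δ₂ ε1) with hδmin
  have hδminpos : 0 < δmin := lt_min hδ₁pos (lt_min hδ₂pos (by positivity))
  -- convergence of the scaled elements composed with g
  set Xn : ℕ → V →L[k] V := fun n => r (φs n) • ((γs (φs n) : V →L[k] V)) with hXn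
  have hconv' : Tendsto (fun n => (Xn n).comp gc) atTop (nhds (A.comp gc)) := by
    have hcont : Continuous fun X : V →L[k] V => X.comp gc :=
      ((ContinuousLinearMap.compL k V V V).flip gc).continuous
    exact (hcont.tendsto A).comp hconv
  obtain ⟨N, hN0⟩ := Metric.tendsto_atTop.mp hconv' δmin hδminpos
  have hN := hN0 N le_rfl
  rw [dist_eq_norm, ← hBeq] at hN
  set S : V →L[k] V := (Xn N).comp gc with hSdef
  have hSB : ‖S - B‖ < δmin := hN
  have hSB1 : ‖S - B‖ ≤ δ₁ := le_trans hSB.le (min_le_left _ _)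
  have hSB2 : ‖S - B‖ ≤ δ₂ := le_trans hSB.le (le_trans (min_le_right _ _) (min_le_left _ _))
  have hSBe : ‖S - B‖ ≤ ε1 := le_trans hSB.le (le_trans (min_le_right _ _) (min_le_right _ _))
  -- primal eigenvector
  obtain ⟨lamS, h, hφ₀h, hh1, hlamc, heig⟩ := Hprimal S (by rw [← hBdef]; exact hSB1)
  -- dual eigenvector
  have hTtS : ‖Tt S - c • ev.smulRight φ₀‖ ≤ δ₂ := by
    rw [← hBt, ← map_sub Tt S B]
    exact le_trans (hTtle _) hSB2
  obtain ⟨mu, η, hηe, hηnorm, hmuc, heigd⟩ := Hdual (Tt S) hTtS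
  have hηe' : η e = 0 := by rw [← hev_apply]; exact hηe
  have hTtSψ : ∀ (ψ : V →L[k] k) (x : V), ψ (S x) = (Tt S ψ) x :=
    fun ψ x => (hTt_apply S ψ x).symm
  -- names
  set rN : k := r (φs N) with hrNdef
  have hrN : rN ≠ 0 := by
    intro h0
    have := hnorm1 (φs N)
    rw [← hrNdef, h0, zero_smul, norm_zero] at this
    norm_num at this
  set δel : V ≃L[k] V := γs (φs N) * g with hδeldef
  have hδelΓ : δel ∈ Γ := hsemi _ (hγΓ _) g hgΓ
  have hSel : ∀ x : V, S x = rN • (δel x) := by intro x; rfl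
  have hδelS : ∀ x : V, δel x = rN⁻¹ • S x := by
    intro x
    rw [hSel x, inv_smul_smul₀ hrN]
  have hε1pos : (0:ℝ) < ε1 := by rw [hε1def]; positivity
  clear_value gc c e φ₀ B Tt ev εη ε1 δmin Xn S rN δel
  set v : V := e + h with hvdef
  set ψ : V →L[k] k := φ₀ + η with hψdef
  have hψv : ψ v = 1 + η h := by
    rw [hψdef, hvdef]
    simp only [ContinuousLinearMap.add_apply, map_add, hφ₀e, hφ₀h, hηe']
    ring
  have hηh : ‖η h‖ ≤ 1/2 := by
    calc ‖η h‖ ≤ ‖η‖ * ‖h‖ := η.le_opNorm h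
      _ ≤ εη * 1 := mul_le_mul hηnorm hh1 (norm_nonneg _) hεηpos.le
      _ ≤ 1/2 := by rw [mul_one]; exact hεηhalf
  have hψvne : ψ v ≠ 0 := by
    intro h0
    rw [hψv] at h0
    have : η h = -1 := by linear_combination h0
    rw [this, norm_neg, norm_one] at hηh
    norm_num at hηh
  have hvne : v ≠ 0 := by
    intro h0
    apply hψvne
    rw [h0, map_zero]
  set lam : k := rN⁻¹ * lamS with hlamdef
  set L : Submodule k V := Submodule.span k {v} with hLdef
  set H : Submodule k V := LinearMap.ker (ψ : V →ₗ[k] k) with hHdef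
  have hLrank : Module.finrank k L = 1 := finrank_span_singleton hvne
  have hδv : δel v = lam • v := by
    rw [hδelS, heig, smul_smul, hlamdef]
  have hLinv : ∀ u ∈ L, δel u = lam • u := by
    intro u hu
    obtain ⟨t, rfl⟩ := Submodule.mem_span_singleton.mp hu
    rw [map_smul, hδv, smul_comm]
  have hψS : ∀ x : V, ψ x = 0 → ψ (S x) = 0 := by
    intro x hx
    rw [hψdef, hTtSψ (φ₀ + η) x, heigd]
    simp only [ContinuousLinearMap.smul_apply, smul_eq_mul, ← hψdef, hx, mul_zero]
  have hHinv : ∀ u ∈ H, δel u ∈ H := by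
    intro u hu
    rw [hHdef, LinearMap.mem_ker, ContinuousLinearMap.coe_coe] at hu ⊢
    rw [hδelS, map_smul, hψS u hu, smul_zero]
  have hcompl : IsCompl L H := by
    constructor
    · rw [Submodule.disjoint_def]
      intro x hxL hxH
      obtain ⟨t, rfl⟩ := Submodule.mem_span_singleton.mp hxL
      have h0 : ψ (t • v) = 0 := LinearMap.mem_ker.mp hxH
      rw [map_smul, smul_eq_mul] at h0
      rcases mul_eq_zero.mp h0 with h' | h'
      · rw [h', zero_smul]
      · exact absurd h' hψvne
    · rw [codisjoint_iff_le_sup]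
      intro x _
      refine Submodule.mem_sup.mpr ⟨(ψ x * (ψ v)⁻¹) • v, ?_, x - (ψ x * (ψ v)⁻¹) • v, ?_, by abel⟩
      · exact Submodule.smul_mem _ _ (Submodule.mem_span_singleton_self v)
      · rw [hHdef, LinearMap.mem_ker, ContinuousLinearMap.coe_coe, map_sub, map_smul, smul_eq_mul]
        field_simp
        simp
  clear_value v ψ L H lam
  clear Hprimal Hdual hconv hconv' hN0 hTtS heigd hTt_apply hTtSψ hev_apply hBt hTtle hirr
  -- bound on S restricted to H
  set M : ℝ := ‖c‖ * ‖e‖ * εη + ε1 with hMdef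
  have hM0 : 0 ≤ M := by
    rw [hMdef]
    have h1 : 0 ≤ ‖c‖ * ‖e‖ * εη :=
      mul_nonneg (mul_nonneg (norm_nonneg c) (norm_nonneg e)) hεηpos.le
    linarith [hε1pos.le]
  have hSbound : ∀ x : V, ψ x = 0 → ‖S x‖ ≤ M * ‖x‖ := by
    intro x hx
    have hφ₀x : φ₀ x = -(η x) := by
      rw [hψdef] at hx
      have h0 : φ₀ x + η x = 0 := hx
      linear_combination h0
    have h1 : S x = B x + (S - B) x := by simp
    have h2 : ‖B x‖ ≤ ‖c‖ * ‖e‖ * εη * ‖x‖ := by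
      rw [hBdef]
      simp only [ContinuousLinearMap.smul_apply, ContinuousLinearMap.smulRight_apply]
      rw [norm_smul, norm_smul, hφ₀x, norm_neg]
      have hηx : ‖η x‖ ≤ εη * ‖x‖ :=
        le_trans (η.le_opNorm x) (mul_le_mul_of_nonneg_right hηnorm (norm_nonneg x))
      calc ‖c‖ * (‖η x‖ * ‖e‖) ≤ ‖c‖ * ((εη * ‖x‖) * ‖e‖) := by
            apply mul_le_mul_of_nonneg_left _ (norm_nonneg c)
            exact mul_le_mul_of_nonneg_right hηx (norm_nonneg e)
        _ = ‖c‖ * ‖e‖ * εη * ‖x‖ := by ring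
    have h3 : ‖(S - B) x‖ ≤ ε1 * ‖x‖ :=
      le_trans ((S - B).le_opNorm x) (mul_le_mul_of_nonneg_right hSBe (norm_nonneg x))
    calc ‖S x‖ ≤ ‖B x‖ + ‖(S - B) x‖ := by rw [h1]; exact norm_add_le _ _
      _ ≤ ‖c‖ * ‖e‖ * εη * ‖x‖ + ε1 * ‖x‖ := add_le_add h2 h3
      _ = M * ‖x‖ := by rw [hMdef]; ring
  clear_value M
  have hMlt : M < ‖c‖ / 2 := by
    have hp0 : (0:ℝ) ≤ ‖c‖ * ‖e‖ := by positivity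
    have k1 : εη * (4 * (‖c‖ * ‖e‖ + 1)) ≤ ‖c‖ := by
      have := min_le_right (1/2 : ℝ) (‖c‖ / (4 * (‖c‖ * ‖e‖ + 1)))
      rw [← hεηdef] at this
      rw [← le_div_iff₀ (by positivity)]
      exact this
    rw [hMdef, hε1def]
    linarith [hεηpos.le, hc0.le]
  have hlamSlb : ‖c‖ / 2 ≤ ‖lamS‖ := by
    have h2 : ‖c‖ - ‖lamS‖ ≤ ‖lamS - c‖ := by
      rw [norm_sub_rev]; exact norm_sub_norm_le _ _
    linarith
  -- the restricted operator
  have hmapsl : ∀ x ∈ H, ((δel : V →L[k] V) : V →ₗ[k] V) x ∈ H := by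
    intro x hx
    exact hHinv x hx
  set Tlin : H →ₗ[k] H := (((δel : V →L[k] V) : V →ₗ[k] V)).restrict hmapsl with hTlin
  set T : H →L[k] H := LinearMap.toContinuousLinearMap Tlin with hT
  have hTw : ∀ w : H, (T w : V) = δel w := by
    intro w
    rfl
  have hinj : Function.Injective Tlin := by
    intro w w' hww
    have : δel (w : V) = δel (w' : V) := by
      have := congrArg (Subtype.val) hww
      simpa [hTlin, LinearMap.restrict_apply] using this
    exact Subtype.ext (δel.injective this)
  have hsurj : Function.Surjective Tlin := LinearMap.injective_iff_surjective.mp hinj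
  set eqv : H ≃ₗ[k] H := LinearEquiv.ofBijective Tlin ⟨hinj, hsurj⟩ with heqv
  set Tinv : H →L[k] H := LinearMap.toContinuousLinearMap (eqv.symm : H →ₗ[k] H) with hTinv
  have hTTinv : T * Tinv = 1 := by
    apply ContinuousLinearMap.ext
    intro w
    show T (Tinv w) = w
    have h1 : T (Tinv w) = Tlin (eqv.symm w) := rfl
    rw [h1]
    exact eqv.apply_symm_apply w
  have hTinvT : Tinv * T = 1 := by
    apply ContinuousLinearMap.ext
    intro w
    show Tinv (T w) = w
    have h1 : Tinv (T w) = eqv.symm (eqv w) := rfl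
    rw [h1]
    exact eqv.symm_apply_apply w
  -- H is nontrivial
  have hHrank : 1 ≤ Module.finrank k H := by
    have := Submodule.finrank_add_eq_of_isCompl hcompl
    omega
  haveI : Nontrivial H := Module.nontrivial_of_finrank_pos (R := k) (by omega)
  have hTnorm : ‖T‖ ≤ ‖rN⁻¹‖ * M := by
    apply ContinuousLinearMap.opNorm_le_bound _ (by positivity)
    intro w
    have h1 : ‖T w‖ = ‖(T w : V)‖ := rfl
    rw [h1, hTw, hδelS, norm_smul]
    have h2 : ψ (w : V) = 0 := by
      have hw2 : (w : V) ∈ LinearMap.ker (ψ : V →ₗ[k] k) := by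
        rw [← hHdef]; exact w.2
      exact LinearMap.mem_ker.mp hw2
    have h3 : ‖S (w : V)‖ ≤ M * ‖(w : V)‖ := hSbound _ h2
    have h4 : ‖(w : V)‖ = ‖w‖ := rfl
    rw [h4] at h3
    calc ‖rN⁻¹‖ * ‖S (w : V)‖ ≤ ‖rN⁻¹‖ * (M * ‖w‖) :=
          mul_le_mul_of_nonneg_left h3 (norm_nonneg _)
      _ = ‖rN⁻¹‖ * M * ‖w‖ := by ring
  obtain ⟨ρ, hρtend, hρle⟩ := spectral_limit T Tinv hTTinv hTinvT
  refine ⟨δel, hδelΓ, lam, L, H, hLrank, hLinv, hHinv, hcompl, T, ρ, hTw, hρtend, ?_⟩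
  have hrNinv : (0:ℝ) < ‖rN⁻¹‖ := by
    rw [norm_pos_iff]
    exact inv_ne_zero hrN
  calc ρ ≤ ‖T‖ := hρle
    _ ≤ ‖rN⁻¹‖ * M := hTnorm
    _ < ‖rN⁻¹‖ * ‖lamS‖ := by
        apply mul_lt_mul_of_pos_left _ hrNinv
        linarith
    _ = ‖lam‖ := by rw [hlamdef, norm_mul, norm_inv]
end
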